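/- Let z_1, ..., z_N be the zeros of H_N and let v_n := (z_1^{n-1},...,z_N^{n-1})^T for 1 \le n \le N. With S_N the matrix with s_{ii} = 1 + \sum_{l\ne i}(z_i-z_l)^{-2}, s_{ij} = -(z_i-z_j)^{-2} (i\ne j), the i-th coordinate of (S_N - n I_N)v_n equals (1-n)z_i^{n-1} + \sum_{j \ne i} (z_i^{n-1} - z_j^{n-1})/(z_i - z_j)^2, and this equals -\sum_{m=1}^{n-2} \sum_{l=0}^{m-1} z_i^{n-3-l} ( s_l - z_i^l ), where s_l = \sum_{j=1}^N z_j^l. -/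

import Mathlib

open Polynomial Finset Matrix

/-- The physicists' Hermite polynomials, orthogonal w.r.t. the weight `e^{-x^2}`. -/
noncomputable def physHermite : ℕ → Polynomial ℝ
  | 0 => 1
  | 1 => 2 * X
  | n + 2 => 2 * X * physHermite (n + 1) - C (2 * ((n : ℝ) + 1)) * physHermite n

lemma physHermite_rec (n : ℕ) : physHermite (n + 2)
    = 2 * X * physHermite (n + 1) - C (2 * ((n : ℝ) + 1)) * physHermite n := rfl

lemma physHermite_deriv : ∀ n, derivative (physHermite n) = C (2 * (n : ℝ)) * physHermite (n - 1) := by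
  intro n
  induction n using Nat.twoStepInduction with
  | zero => simp [physHermite]
  | one => simp [physHermite, map_ofNat]
  | more m ih1 ih2 =>
    rcases m with _ | k
    · norm_num [physHermite, map_ofNat]
      ring
    · rw [physHermite_rec (k+1), derivative_sub, derivative_mul, derivative_C_mul, ih2, ih1]
      have h2 : derivative (2 * X : Polynomial ℝ) = C 2 := by simp [map_ofNat]
      rw [h2]
      simp only [show k+1+1-1 = k+1 from rfl, show k+1+2-1 = k+2 from rfl,
        show k+1-1 = k from rfl, show k+1+1 = k+2 from rfl]
      rw [physHermite_rec k]
      have hc : (C (2 * (((k+1+2:ℕ)):ℝ)) : Polynomial ℝ)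
          = C 2 + C (2 * (((k+2:ℕ)):ℝ)) := by rw [← C_add]; push_cast; ring_nf
      rw [hc]
      have hb : (C (2 * (((k+1:ℕ)):ℝ)) : Polynomial ℝ) = C (2 * ((k:ℝ)+1)) := by push_cast; ring_nf
      rw [hb]
      push_cast
      ring

lemma physHermite_natDegree_le : ∀ n, (physHermite n).natDegree ≤ n := by
  intro n
  induction n using Nat.twoStepInduction with
  | zero => simp [physHermite]
  | one =>
    calc (2 * X : Polynomial ℝ).natDegree ≤ (2:Polynomial ℝ).natDegree + X.natDegree :=
        natDegree_mul_le
    _ ≤ 1 := by simp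
  | more m ih1 ih2 =>
    rw [physHermite_rec]
    calc (2 * X * physHermite (m+1) - C (2 * ((m:ℝ)+1)) * physHermite m).natDegree
        ≤ max (2 * X * physHermite (m+1)).natDegree ((C (2 * ((m:ℝ)+1)) * physHermite m).natDegree) :=
        natDegree_sub_le _ _
    _ ≤ m + 2 := by
        apply max_le
        · calc (2 * X * physHermite (m+1)).natDegree
              ≤ (2 * X : Polynomial ℝ).natDegree + (physHermite (m+1)).natDegree := natDegree_mul_le
          _ ≤ 1 + (m+1) := by
              gcongr
              calc (2 * X : Polynomial ℝ).natDegree ≤ (2:Polynomial ℝ).natDegree + X.natDegree :=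
                  natDegree_mul_le
              _ ≤ 1 := by simp
          _ ≤ m + 2 := by omega
        · calc (C (2 * ((m:ℝ)+1)) * physHermite m).natDegree ≤ (physHermite m).natDegree :=
              natDegree_C_mul_le _ _
          _ ≤ m + 2 := by omega

lemma physHermite_coeff : ∀ n, (physHermite n).coeff n = 2 ^ n := by
  intro n
  induction n using Nat.twoStepInduction with
  | zero => simp [physHermite]
  | one => simp [physHermite, coeff_X]
  | more m ih1 ih2 =>
    rw [physHermite_rec, coeff_sub, coeff_C_mul,
      coeff_eq_zero_of_natDegree_lt (lt_of_le_of_lt (physHermite_natDegree_le m) (by omega)),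
      mul_assoc, coeff_ofNat_mul, coeff_X_mul, ih2]
    push_cast
    ring

lemma physHermite_factor (N : ℕ) (z : Fin N → ℝ) (hinj : Function.Injective z)
    (hroot : ∀ i, (physHermite N).eval (z i) = 0) :
    physHermite N = C ((2:ℝ) ^ N) * ∏ i, (X - C (z i)) := by
  set H := physHermite N with hH
  have hne : H ≠ 0 := by
    intro h
    have h2 := physHermite_coeff N
    rw [← hH, h] at h2
    simp at h2
    exact (pow_ne_zero N (two_ne_zero)) h2.symm
  set M : Multiset ℝ := Multiset.map z Finset.univ.val with hM
  have hnodup : M.Nodup := Multiset.Nodup.map hinj Finset.univ.nodup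
  have hsub : M ⊆ H.roots := by
    intro a ha
    rw [hM, Multiset.mem_map] at ha
    obtain ⟨i, _, rfl⟩ := ha
    rw [mem_roots hne]
    exact hroot i
  have hle : M ≤ H.roots := (Multiset.le_iff_subset hnodup).2 hsub
  have hcardM : M.card = N := by simp [hM]
  have hdegle : H.natDegree ≤ N := physHermite_natDegree_le N
  have hcard : H.roots.card = H.natDegree := by
    have h1 : H.roots.card ≤ H.natDegree := card_roots' H
    have h2 : N ≤ H.roots.card := hcardM ▸ Multiset.card_le_card hle
    omega
  have hdeg : H.natDegree = N := by
    have h2 : N ≤ H.roots.card := hcardM ▸ Multiset.card_le_card hle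
    have h1 : H.roots.card ≤ H.natDegree := card_roots' H
    omega
  have hMeq : M = H.roots := by
    apply Multiset.eq_of_le_of_card_le hle
    rw [hcard, hdeg, hcardM]
  have hlc : H.leadingCoeff = (2:ℝ) ^ N := by
    rw [leadingCoeff, hdeg, hH]
    exact_mod_cast physHermite_coeff N
  have := C_leadingCoeff_mul_prod_multiset_X_sub_C hcard
  rw [hlc, ← hMeq] at this
  rw [← this, hM]
  congr 1
  rw [Multiset.map_map]
  rfl

lemma derivative_finset_prod {ι : Type*} [DecidableEq ι] (s : Finset ι) (f : ι → Polynomial ℝ) :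
    derivative (∏ i ∈ s, f i) = ∑ i ∈ s, (∏ j ∈ s.erase i, f j) * derivative (f i) := by
  induction s using Finset.induction with
  | empty => simp
  | insert a s ha ih =>
    rw [Finset.prod_insert ha, derivative_mul, ih, Finset.sum_insert ha,
      Finset.erase_insert ha, Finset.mul_sum]
    congr 1
    · ring
    · apply Finset.sum_congr rfl
      intro j hj
      rw [Finset.erase_insert_of_ne (fun h : a = j => ha (h ▸ hj)),
        Finset.prod_insert (fun h => ha (Finset.mem_of_mem_erase h))]
      ring

lemma physHermite_ode (N : ℕ) :
    derivative (derivative (physHermite N))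
      = 2 * X * derivative (physHermite N) - C (2 * (N:ℝ)) * physHermite N := by
  rcases N with _ | _ | m
  · simp [physHermite]
  · simp [physHermite, map_ofNat]
    ring
  · rw [physHermite_deriv (m+2)]
    simp only [show m+2-1 = m+1 from rfl]
    rw [derivative_C_mul, physHermite_deriv (m+1)]
    simp only [show m+1-1 = m from rfl]
    rw [physHermite_rec m]
    have hc : (C (2 * (((m+2:ℕ)):ℝ)) : Polynomial ℝ) = C (2 * ((m:ℝ)+2)) := by push_cast; ring_nf
    have hb : (C (2 * (((m+1:ℕ)):ℝ)) : Polynomial ℝ) = C (2 * ((m:ℝ)+1)) := by push_cast; ring_nf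
    rw [hc, hb]
    ring_nf

lemma stieltjes (N : ℕ) (z : Fin N → ℝ) (hinj : Function.Injective z)
    (hroot : ∀ i, (physHermite N).eval (z i) = 0) (i : Fin N) :
    ∑ j ∈ Finset.univ.erase i, (z i - z j)⁻¹ = z i := by
  set P : Polynomial ℝ := ∏ k, (X - C (z k)) with hP
  have hfac := physHermite_factor N z hinj hroot
  -- evaluation of derivative of P at z i
  have hDP : derivative P = ∑ b, ∏ a ∈ Finset.univ.erase b, (X - C (z a)) := by
    rw [hP, derivative_finset_prod]
    simp
  have hzero : ∀ b : Fin N, b ≠ i → eval (z i) (∏ a ∈ Finset.univ.erase b, (X - C (z a))) = 0 := by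
    intro b hb
    rw [eval_prod]
    apply Finset.prod_eq_zero (Finset.mem_erase.2 ⟨fun h => hb h.symm, Finset.mem_univ i⟩)
    simp
  have hevalDP : eval (z i) (derivative P) = ∏ a ∈ Finset.univ.erase i, (z i - z a) := by
    rw [hDP, eval_finset_sum]
    rw [Finset.sum_eq_single i (fun b _ hb => hzero b hb) (fun h => absurd (Finset.mem_univ i) h)]
    rw [eval_prod]
    simp
  -- second derivative
  set g : Fin N → Fin N → ℝ := fun b c => ∏ a ∈ (Finset.univ.erase b).erase c, (z i - z a) with hg
  have hDDP : eval (z i) (derivative (derivative P)) = ∑ b, ∑ c ∈ Finset.univ.erase b, g b c := by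
    rw [hDP, derivative_sum]
    rw [eval_finset_sum]
    apply Finset.sum_congr rfl
    intro b _
    rw [derivative_finset_prod, eval_finset_sum]
    apply Finset.sum_congr rfl
    intro c _
    simp [hg, eval_prod]
  have hgzero : ∀ b c : Fin N, b ≠ i → c ≠ i → c ≠ b → g b c = 0 := by
    intro b c hb hc hcb
    apply Finset.prod_eq_zero
      (Finset.mem_erase.2 ⟨fun h => hc h.symm,
        Finset.mem_erase.2 ⟨fun h => hb h.symm, Finset.mem_univ i⟩⟩)
    simp
  have hsum2 : (∑ b, ∑ c ∈ Finset.univ.erase b, g b c)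
      = 2 * ∑ j ∈ Finset.univ.erase i, g i j := by
    rw [← Finset.add_sum_erase _ _ (Finset.mem_univ i)]
    have h2 : ∑ b ∈ Finset.univ.erase i, ∑ c ∈ Finset.univ.erase b, g b c
        = ∑ b ∈ Finset.univ.erase i, g i b := by
      apply Finset.sum_congr rfl
      intro b hb
      have hbne : b ≠ i := (Finset.mem_erase.1 hb).1
      rw [Finset.sum_eq_single i (fun c hc hci => hgzero b c hbne hci (Finset.mem_erase.1 hc).1)
        (fun h => absurd (Finset.mem_erase.2 ⟨fun he => hbne he.symm, Finset.mem_univ i⟩) h)]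
      simp only [hg]
      rw [Finset.erase_right_comm]
    rw [h2]
    ring
  -- use the ODE
  have hode := physHermite_ode N
  have hev : eval (z i) (derivative (derivative (physHermite N)))
      = 2 * z i * eval (z i) (derivative (physHermite N)) := by
    rw [hode]
    simp [hroot i]
    try ring
  have hc0 : ((2:ℝ)^N) ≠ 0 := pow_ne_zero _ two_ne_zero
  have hfac' : derivative (physHermite N) = C ((2:ℝ)^N) * derivative P := by
    rw [hfac, derivative_C_mul]
  have hfac'' : derivative (derivative (physHermite N)) = C ((2:ℝ)^N) * derivative (derivative P) := by
    rw [hfac', derivative_C_mul]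
  rw [hfac'', hfac'] at hev
  simp only [eval_mul, eval_C] at hev
  rw [hDDP, hsum2, hevalDP] at hev
  have hkey : ∑ j ∈ Finset.univ.erase i, g i j
      = z i * ∏ a ∈ Finset.univ.erase i, (z i - z a) := by
    have h2 : ((2:ℝ)^N * 2) ≠ 0 := by positivity
    apply mul_left_cancel₀ h2
    calc ((2:ℝ)^N * 2) * ∑ j ∈ Finset.univ.erase i, g i j
        = (2:ℝ)^N * (2 * ∑ j ∈ Finset.univ.erase i, g i j) := by ring
      _ = 2 * z i * ((2:ℝ)^N * ∏ a ∈ Finset.univ.erase i, (z i - z a)) := hev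
      _ = ((2:ℝ)^N * 2) * (z i * ∏ a ∈ Finset.univ.erase i, (z i - z a)) := by ring
  -- now divide by D
  set D : ℝ := ∏ a ∈ Finset.univ.erase i, (z i - z a) with hD
  have hDne : D ≠ 0 := by
    rw [hD]
    apply Finset.prod_ne_zero_iff.2
    intro a ha
    have : a ≠ i := (Finset.mem_erase.1 ha).1
    exact sub_ne_zero_of_ne (fun h => this ((hinj h).symm))
  have hgD : ∀ j ∈ Finset.univ.erase i, g i j = D * (z i - z j)⁻¹ := by
    intro j hj
    have hji : (z i - z j) ≠ 0 :=
      sub_ne_zero_of_ne (fun h => (Finset.mem_erase.1 hj).1 ((hinj h).symm))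
    have := Finset.mul_prod_erase (Finset.univ.erase i) (fun a => z i - z a) hj
    rw [hg]
    field_simp
    rw [mul_comm]
    exact this
  rw [Finset.sum_congr rfl hgD, ← Finset.mul_sum] at hkey
  have := mul_left_cancel₀ hDne (hkey.trans (by ring))
  linarith [this]

lemma pow_sub_pow' (a b : ℝ) (m : ℕ) :
    a^m - b^m = (a - b) * ∑ l ∈ Finset.range m, a^(m-1-l) * b^l := by
  rw [← geom_sum₂_mul, mul_comm]
  congr 1
  rw [← Finset.sum_range_reflect]
  apply Finset.sum_congr rfl
  intro l hl
  have h : m - 1 - (m - 1 - l) = l := by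
    have := Finset.mem_range.1 hl; omega
  rw [h]

theorem stmt_10 (N : ℕ) (z : Fin N → ℝ)
    (hord : ∀ i j : Fin N, i < j → z j < z i)
    (hroot : ∀ i, (physHermite N).eval (z i) = 0)
    (S : Matrix (Fin N) (Fin N) ℝ)
    (hS : ∀ i j, S i j = if i = j
      then 1 + ∑ l ∈ Finset.univ.erase i, ((z i - z l) ^ 2)⁻¹
      else -((z i - z j) ^ 2)⁻¹)
    (s : ℕ → ℝ) (hs : ∀ l, s l = ∑ j, (z j) ^ l)
    (n : ℕ) (hn1 : 1 ≤ n) (hnN : n ≤ N)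
    (v : Fin N → ℝ) (hv : ∀ i, v i = (z i) ^ (n - 1)) :
    ∀ i, (S.mulVec v - (n : ℝ) • v) i
        = (1 - (n : ℝ)) * (z i) ^ (n - 1)
          + ∑ j ∈ Finset.univ.erase i, ((z i) ^ (n - 1) - (z j) ^ (n - 1)) / (z i - z j) ^ 2 ∧
      (S.mulVec v - (n : ℝ) • v) i
        = -∑ m ∈ Finset.Icc 1 (n - 2), ∑ l ∈ Finset.range m,
            (z i) ^ (n - 3 - l) * (s l - (z i) ^ l) := by
  intro i
  have hinj : Function.Injective z := by
    intro a b hab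
    by_contra hne
    rcases lt_or_gt_of_ne hne with h | h
    · exact absurd hab (ne_of_gt (hord a b h))
    · exact absurd hab (ne_of_lt (hord b a h))
  have hdist : ∀ j ∈ Finset.univ.erase i, z i - z j ≠ 0 := by
    intro j hj
    exact sub_ne_zero_of_ne (fun h => (Finset.mem_erase.1 hj).1 ((hinj h).symm))
  have hst := stieltjes N z hinj hroot i
  -- Part 1
  have hA : (S.mulVec v - (n : ℝ) • v) i
      = (1 - (n : ℝ)) * (z i) ^ (n - 1)
        + ∑ j ∈ Finset.univ.erase i, ((z i) ^ (n - 1) - (z j) ^ (n - 1)) / (z i - z j) ^ 2 := by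
    simp only [Pi.sub_apply, Pi.smul_apply, smul_eq_mul, Matrix.mulVec, dotProduct]
    rw [← Finset.add_sum_erase _ (fun j => S i j * v j) (Finset.mem_univ i), hS i i, if_pos rfl]
    have hoff : ∀ j ∈ Finset.univ.erase i, S i j * v j
        = -(((z i - z j) ^ 2)⁻¹ * (z j) ^ (n-1)) := by
      intro j hj
      rw [hS i j, if_neg (fun h => (Finset.mem_erase.1 hj).1 h.symm), hv j]
      ring
    rw [Finset.sum_congr rfl hoff, hv i]
    have hsplit : ∀ j ∈ Finset.univ.erase i,
        ((z i) ^ (n - 1) - (z j) ^ (n - 1)) / (z i - z j) ^ 2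
        = ((z i - z j) ^ 2)⁻¹ * (z i) ^ (n-1) - ((z i - z j) ^ 2)⁻¹ * (z j) ^ (n-1) := by
      intro j hj
      rw [div_eq_mul_inv]
      ring
    rw [Finset.sum_congr rfl hsplit, Finset.sum_sub_distrib, ← Finset.sum_mul, Finset.sum_neg_distrib]
    ring
  refine ⟨hA, ?_⟩
  rw [hA]
  -- trivial case n = 1
  rcases eq_or_lt_of_le hn1 with h1 | h2
  · rw [← h1]
    norm_num
  have hn2 : 2 ≤ n := h2
  -- per-j identity
  have hper : ∀ j ∈ Finset.univ.erase i,
      ((z i) ^ (n - 1) - (z j) ^ (n - 1)) / (z i - z j) ^ 2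
      = ((n:ℝ) - 1) * (z i)^(n-2) * (z i - z j)⁻¹
        - ∑ l ∈ Finset.range (n-1), ∑ p ∈ Finset.range l, (z i)^(n-3-p) * (z j)^p := by
    intro j hj
    have hne := hdist j hj
    set a := z i
    set b := z j
    have e1 := pow_sub_pow' a b (n-1)
    have e2 : ∀ l ∈ Finset.range (n-1), a^(n-1-1-l) * b^l
        = a^(n-2) - (a-b) * ∑ p ∈ Finset.range l, a^(n-3-p) * b^p := by
      intro l hl
      have hl' : l < n - 1 := Finset.mem_range.1 hl
      have hb : b^l = a^l - (a-b) * ∑ p ∈ Finset.range l, a^(l-1-p) * b^p := by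
        have := pow_sub_pow' a b l
        linarith
      calc a^(n-1-1-l) * b^l
          = a^(n-1-1-l) * a^l
            - (a-b) * (a^(n-1-1-l) * ∑ p ∈ Finset.range l, a^(l-1-p) * b^p) := by
            rw [hb]; ring
        _ = a^(n-2) - (a-b) * ∑ p ∈ Finset.range l, a^(n-3-p) * b^p := by
            congr 1
            · rw [← pow_add]; congr 1; omega
            · congr 1
              rw [Finset.mul_sum]
              apply Finset.sum_congr rfl
              intro p hp
              have hp' : p < l := Finset.mem_range.1 hp
              rw [← mul_assoc, ← pow_add]
              congr 2
              omega
    have e3 : ∑ l ∈ Finset.range (n-1), a^(n-1-1-l) * b^l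
        = ((n:ℝ)-1) * a^(n-2)
          - (a-b) * ∑ l ∈ Finset.range (n-1), ∑ p ∈ Finset.range l, a^(n-3-p) * b^p := by
      rw [Finset.sum_congr rfl e2, Finset.sum_sub_distrib, Finset.sum_const, Finset.card_range,
        ← Finset.mul_sum, nsmul_eq_mul]
      congr 2
      rw [Nat.cast_sub hn1, Nat.cast_one]
    rw [e1, e3]
    field_simp
  rw [Finset.sum_congr rfl hper, Finset.sum_sub_distrib, ← Finset.mul_sum, hst]
  -- swap sums
  have hswap : ∑ j ∈ Finset.univ.erase i, ∑ l ∈ Finset.range (n-1), ∑ p ∈ Finset.range l,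
      (z i)^(n-3-p) * (z j)^p
      = ∑ l ∈ Finset.range (n-1), ∑ p ∈ Finset.range l, (z i)^(n-3-p) * (s p - (z i)^p) := by
    rw [Finset.sum_comm]
    apply Finset.sum_congr rfl
    intro l _
    rw [Finset.sum_comm]
    apply Finset.sum_congr rfl
    intro p _
    rw [← Finset.mul_sum]
    congr 1
    have := Finset.add_sum_erase Finset.univ (fun j => (z j) ^ p) (Finset.mem_univ i)
    rw [hs p]
    linarith
  rw [hswap]
  -- outer sum reindex
  have hrange : Finset.range (n-1) = insert 0 (Finset.Icc 1 (n-2)) := by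
    ext x
    simp only [Finset.mem_range, Finset.mem_insert, Finset.mem_Icc]
    omega
  have hzero0 : ∑ p ∈ Finset.range 0, (z i)^(n-3-p) * (s p - (z i)^p) = 0 := by simp
  rw [hrange, Finset.sum_insert (by simp), hzero0, zero_add]
  -- final algebra
  have hpow : (z i)^(n-2) * z i = (z i)^(n-1) := by
    rw [← pow_succ]
    congr 1
    omega
  have : ((n:ℝ)-1) * ((z i)^(n-2) * z i) = ((n:ℝ)-1) * (z i)^(n-1) := by rw [hpow]
  ring_nf
  ring_nf at this
  linarith [this]
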